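/- Let G be a group and let N be a normal subgroup of G which is the normal closure in G of k elements a₁, …, a_k ∈ G. Assume that every group homomorphism from G to the additive group ℝ is trivial (equivalently, H¹(G; ℝ) = 0 for the trivial action). If the second group cohomology H²(G; ℝ) with trivial real coefficients is a finite-dimensional real vector space of dimension d, then H²(G/N; ℝ) with trivial real coefficients is also finite-dimensional, of dimension at most d + k. -/

import Mathlib

open groupCohomology

section Compat

variable {k G : Type} [CommRing k] [Group G]

abbrev twoCocycles (A : Rep.{0, 0, 0} k G) : Submodule k (G × G → A) := cocycles₂ A

def twoCoboundaries (A : Rep.{0, 0, 0} k G) : Submodule k (twoCocycles A) :=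
  (coboundaries₂ A).comap (cocycles₂ A).subtype

theorem mem_twoCocycles_def {A : Rep.{0, 0, 0} k G} (f : G × G → A) :
    f ∈ twoCocycles A ↔ ∀ g h j : G,
      A.ρ g (f (h, j)) - f (g * h, j) + f (g, h * j) - f (g, h) = 0 :=
  mem_cocycles₂_def f

theorem mem_twoCoboundaries_iff {A : Rep.{0, 0, 0} k G} (f : twoCocycles A) :
    f ∈ twoCoboundaries A ↔ ∃ x : G → A, ∀ g h : G, A.ρ g (x h) - x (g * h) + x g = f (g, h) := by
  show (f : G × G → A) ∈ LinearMap.range (d₁₂ A).hom ↔ _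
  rw [LinearMap.mem_range]
  constructor
  · rintro ⟨x, hx⟩
    exact ⟨x, fun g h => congr_fun hx (g, h)⟩
  · rintro ⟨x, hx⟩
    exact ⟨x, funext fun p => hx p.1 p.2⟩

abbrev H2q (A : Rep.{0, 0, 0} k G) := twoCocycles A ⧸ twoCoboundaries A

noncomputable def isoH2q (A : Rep.{0, 0, 0} k G) : groupCohomology A 2 ≃ₗ[k] H2q A :=
  ((Submodule.quotEquivOfEq (twoCoboundaries A) (LinearMap.ker (H2π A).hom) (by
      ext x
      rw [LinearMap.mem_ker]
      exact (H2π_eq_zero_iff x).symm)).trans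
    (LinearMap.quotKerEquivOfSurjective (H2π A).hom
      (fun x => H2_induction_on x (fun y => ⟨y, rfl⟩)))).symm

end Compat

section Aux

variable {G : Type} [Group G]

private lemma uniq_aux
    (hH1 : ∀ f : G → ℝ, (∀ x y : G, f (x * y) = f x + f y) → ∀ x, f x = 0)
    (u v : G → ℝ) (h : ∀ g h' : G, u h' - u (g * h') + u g = v h' - v (g * h') + v g) :
    u = v := by
  have hom : ∀ x y : G, (u (x * y) - v (x * y)) = (u x - v x) + (u y - v y) := by
    intro x y
    have := h x y
    linarith
  have := hH1 (fun g => u g - v g) hom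
  funext g
  have := this g
  linarith

/-- Inflation on 2-cocycles for trivial real coefficients. -/
private noncomputable def inflZ (N : Subgroup G) [N.Normal] :
    twoCocycles (Rep.trivial ℝ (G ⧸ N) ℝ) →ₗ[ℝ] twoCocycles (Rep.trivial ℝ G ℝ) :=
  LinearMap.codRestrict _
    ((LinearMap.funLeft ℝ ℝ (Prod.map (QuotientGroup.mk : G → G ⧸ N) QuotientGroup.mk)).comp
      (twoCocycles (Rep.trivial ℝ (G ⧸ N) ℝ)).subtype)
    (by
      intro c
      rw [mem_twoCocycles_def]
      intro g h j
      have := (mem_twoCocycles_def (A := Rep.trivial ℝ (G ⧸ N) ℝ)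
        (c : (G ⧸ N) × (G ⧸ N) → ℝ)).1 c.2 (g : G ⧸ N) h j
      simpa [Rep.trivial_ρ, LinearMap.funLeft] using this)

private lemma inflZ_apply (N : Subgroup G) [N.Normal]
    (c : twoCocycles (Rep.trivial ℝ (G ⧸ N) ℝ)) (g h : G) :
    (inflZ N c : G × G → ℝ) (g, h) = (c : (G ⧸ N) × (G ⧸ N) → ℝ) (↑g, ↑h) := rfl

set_option maxHeartbeats 2000000 in
private theorem exists_injective_map
    {k : ℕ} (a : Fin k → G) (N : Subgroup G) [N.Normal]
    (haN : ∀ i, a i ∈ N)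
    (hmin : ∀ H : Subgroup G, H.Normal → (∀ i, a i ∈ H) → N ≤ H)
    (hH1 : ∀ f : G → ℝ, (∀ x y : G, f (x * y) = f x + f y) → ∀ x, f x = 0) :
    ∃ f : H2q (Rep.trivial ℝ (G ⧸ N) ℝ) →ₗ[ℝ]
        H2q (Rep.trivial ℝ G ℝ) × (Fin k → ℝ), Function.Injective f := by
  classical
  -- K : cocycles on G/N whose inflation is a coboundary on G
  let K : Submodule ℝ (twoCocycles (Rep.trivial ℝ (G ⧸ N) ℝ)) :=
    (twoCoboundaries (Rep.trivial ℝ G ℝ)).comap (inflZ N)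
  -- membership in K gives a primitive β
  have hexK : ∀ c : twoCocycles (Rep.trivial ℝ (G ⧸ N) ℝ), c ∈ K →
      ∃ β : G → ℝ, ∀ g h : G, β h - β (g * h) + β g
        = (c : (G ⧸ N) × (G ⧸ N) → ℝ) (↑g, ↑h) := by
    intro c hc
    obtain ⟨β, hβ⟩ := (mem_twoCoboundaries_iff (inflZ N c)).1 hc
    refine ⟨fun g => β g, fun g h => ?_⟩
    have := hβ g h
    rw [Rep.trivial_ρ] at this
    exact this
  have hKofβ : ∀ (c : twoCocycles (Rep.trivial ℝ (G ⧸ N) ℝ)) (β : G → ℝ),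
      (∀ g h : G, β h - β (g * h) + β g = (c : (G ⧸ N) × (G ⧸ N) → ℝ) (↑g, ↑h)) →
      c ∈ K := by
    intro c β hβ
    refine Submodule.mem_comap.2 ((mem_twoCoboundaries_iff (inflZ N c)).2 ⟨β, fun g h => ?_⟩)
    rw [Rep.trivial_ρ]
    exact hβ g h
  -- the chosen primitive
  let bb : ∀ c : twoCocycles (Rep.trivial ℝ (G ⧸ N) ℝ), c ∈ K → (G → ℝ) :=
    fun c hc => Classical.choose (hexK c hc)
  have hbb : ∀ (c : twoCocycles (Rep.trivial ℝ (G ⧸ N) ℝ)) (hc : c ∈ K) (g h : G),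
      bb c hc h - bb c hc (g * h) + bb c hc g
        = (c : (G ⧸ N) × (G ⧸ N) → ℝ) (↑g, ↑h) :=
    fun c hc => Classical.choose_spec (hexK c hc)
  have bbuniq : ∀ (c : twoCocycles (Rep.trivial ℝ (G ⧸ N) ℝ)) (hc : c ∈ K) (β : G → ℝ),
      (∀ g h : G, β h - β (g * h) + β g = (c : (G ⧸ N) × (G ⧸ N) → ℝ) (↑g, ↑h)) →
      β = bb c hc := by
    intro c hc β hβ
    exact uniq_aux hH1 β (bb c hc) (fun g h => by rw [hβ g h, hbb c hc g h])
  -- extend the evaluation map linearly to all cocycles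
  obtain ⟨lam', hlam'⟩ := LinearMap.exists_extend
    ({ toFun := fun (x : K) => fun i => bb x.1 x.2 (a i) - bb x.1 x.2 1
       map_add' := by
         intro x y
         have hsum : bb (x + y).1 (x + y).2 = bb x.1 x.2 + bb y.1 y.2 := by
           refine (bbuniq (x + y).1 (x + y).2 (bb x.1 x.2 + bb y.1 y.2) ?_).symm
           intro g h
           have h1 := hbb x.1 x.2 g h
           have h2 := hbb y.1 y.2 g h
           have h3 : ((x + y).1 : (G ⧸ N) × (G ⧸ N) → ℝ) (↑g, ↑h)
               = (x.1 : (G ⧸ N) × (G ⧸ N) → ℝ) (↑g, ↑h)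
                 + (y.1 : (G ⧸ N) × (G ⧸ N) → ℝ) (↑g, ↑h) := rfl
           rw [h3, ← h1, ← h2]
           simp only [Pi.add_apply]
           ring
         funext i
         simp only [hsum, Pi.add_apply]
         ring
       map_smul' := by
         intro r x
         have hsum : bb (r • x).1 (r • x).2 = r • bb x.1 x.2 := by
           refine (bbuniq (r • x).1 (r • x).2 (r • bb x.1 x.2) ?_).symm
           intro g h
           have h1 := hbb x.1 x.2 g h
           have h3 : ((r • x).1 : (G ⧸ N) × (G ⧸ N) → ℝ) (↑g, ↑h)
               = r • ((x.1 : (G ⧸ N) × (G ⧸ N) → ℝ) (↑g, ↑h)) := rfl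
           rw [h3, ← h1]
           simp only [Pi.smul_apply, smul_eq_mul]
           ring
         funext i
         simp only [hsum, Pi.smul_apply, smul_eq_mul, RingHom.id_apply]
         ring } : K →ₗ[ℝ] (Fin k → ℝ))
  -- the value of lam' on K
  have hlam'val : ∀ (c : twoCocycles (Rep.trivial ℝ (G ⧸ N) ℝ)) (hc : c ∈ K) (i : Fin k),
      lam' c i = bb c hc (a i) - bb c hc 1 := by
    intro c hc i
    have := congr_fun (LinearMap.congr_fun hlam' ⟨c, hc⟩) i
    exact this
  have hπa : ∀ i, ((a i : G) : G ⧸ N) = (1 : G ⧸ N) := by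
    intro i
    rw [QuotientGroup.eq_one_iff]
    exact haN i
  -- direction 1 : kernel elements are coboundaries
  have main1 : ∀ (c : twoCocycles (Rep.trivial ℝ (G ⧸ N) ℝ)), c ∈ K → lam' c = 0 →
      c ∈ twoCoboundaries (Rep.trivial ℝ (G ⧸ N) ℝ) := by
    intro c hcK hc0
    obtain ⟨β, hβ, hβa⟩ : ∃ β : G → ℝ,
        (∀ g h : G, β h - β (g * h) + β g = (c : (G ⧸ N) × (G ⧸ N) → ℝ) (↑g, ↑h)) ∧
        (∀ i, β (a i) = β 1) := by
      refine ⟨bb c hcK, hbb c hcK, fun i => ?_⟩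
      have := hlam'val c hcK i
      rw [hc0] at this
      simp only [Pi.zero_apply] at this
      linarith
    -- key substitution principles
    have keyR : ∀ (g x y : G), ((x : G) : G ⧸ N) = ((y : G) : G ⧸ N) →
        β x - β (g * x) + β g = β y - β (g * y) + β g := by
      intro g x y hxy
      rw [hβ g x, hxy, ← hβ g y]
    have keyL : ∀ (x y h : G), ((x : G) : G ⧸ N) = ((y : G) : G ⧸ N) →
        β h - β (x * h) + β x = β h - β (y * h) + β y := by
      intro x y h hxy
      rw [hβ x h, hxy, ← hβ y h]
    have hmulN : ∀ (g n : G), (n : G ⧸ N) = (1 : G ⧸ N) → β (g * n) = β g + β n - β 1 := by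
      intro g n hn
      have h1 := keyR g n 1 (by rw [hn, QuotientGroup.mk_one])
      rw [mul_one] at h1
      linarith
    have hNmul : ∀ (n g : G), (n : G ⧸ N) = (1 : G ⧸ N) → β (n * g) = β n + β g - β 1 := by
      intro n g hn
      have h1 := keyL n 1 g (by rw [hn, QuotientGroup.mk_one])
      rw [one_mul] at h1
      linarith
    have hmem1 : ∀ n : G, n ∈ N → ((n : G) : G ⧸ N) = 1 :=
      fun n hn => (QuotientGroup.eq_one_iff n).2 hn
    -- the subgroup of elements of N where β equals β 1
    let H : Subgroup G :=
      { carrier := {g | g ∈ N ∧ β g = β 1}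
        one_mem' := ⟨N.one_mem, rfl⟩
        mul_mem' := by
          rintro x y ⟨hx, hβx⟩ ⟨hy, hβy⟩
          refine ⟨N.mul_mem hx hy, ?_⟩
          rw [hmulN x y (hmem1 y hy), hβx, hβy]
          ring
        inv_mem' := by
          rintro x ⟨hx, hβx⟩
          refine ⟨N.inv_mem hx, ?_⟩
          have := hmulN x x⁻¹ (hmem1 x⁻¹ (N.inv_mem hx))
          rw [mul_inv_cancel, hβx] at this
          linarith }
    have hHnormal : H.Normal := by
      constructor
      rintro n ⟨hn, hβn⟩ g
      have hconj : g * n * g⁻¹ ∈ N := ‹N.Normal›.conj_mem n hn g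
      refine ⟨hconj, ?_⟩
      have h1 : β (g * n) = β g + β n - β 1 := hmulN g n (hmem1 n hn)
      have h2 : β ((g * n * g⁻¹) * g) = β (g * n * g⁻¹) + β g - β 1 :=
        hNmul _ g (hmem1 _ hconj)
      have h3 : (g * n * g⁻¹) * g = g * n := by group
      rw [h3, h1] at h2
      rw [hβn] at h1
      linarith
    have hNH : N ≤ H := hmin H hHnormal (fun i => ⟨haN i, hβa i⟩)
    -- β is constant on cosets of N
    have hβconst : ∀ (g n : G), n ∈ N → β (g * n) = β g := by
      intro g n hn
      rw [hmulN g n (hmem1 n hn), (hNH hn).2]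
      ring
    -- β descends to the quotient
    let γ : G ⧸ N → ℝ := fun q => β q.out
    have hγmk : ∀ g : G, γ (↑g : G ⧸ N) = β g := by
      intro g
      obtain ⟨n, hn⟩ := QuotientGroup.mk_out_eq_mul N g
      show β (Quotient.out (↑g : G ⧸ N)) = β g
      rw [hn]
      exact hβconst g n n.2
    rw [mem_twoCoboundaries_iff]
    refine ⟨γ, fun q r => ?_⟩
    rw [Rep.trivial_ρ]
    induction q using QuotientGroup.induction_on with
    | H g =>
    induction r using QuotientGroup.induction_on with
    | H h =>
    rw [← QuotientGroup.mk_mul, hγmk, hγmk, hγmk]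
    exact hβ g h
  -- direction 2 : coboundaries are in the kernel
  have main2 : ∀ (c : twoCocycles (Rep.trivial ℝ (G ⧸ N) ℝ)),
      c ∈ twoCoboundaries (Rep.trivial ℝ (G ⧸ N) ℝ) → c ∈ K ∧ lam' c = 0 := by
    intro c hc
    obtain ⟨δ, hδ⟩ := (mem_twoCoboundaries_iff c).1 hc
    have hδ' : ∀ g h : G, (fun g : G => δ ↑g) h - (fun g : G => δ ↑g) (g * h)
        + (fun g : G => δ ↑g) g = (c : (G ⧸ N) × (G ⧸ N) → ℝ) (↑g, ↑h) := by
      intro g h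
      have := hδ (↑g : G ⧸ N) (↑h : G ⧸ N)
      rw [Rep.trivial_ρ, ← QuotientGroup.mk_mul] at this
      exact this
    have hcK : c ∈ K := hKofβ c _ hδ'
    refine ⟨hcK, ?_⟩
    have hbval : bb c hcK = fun g : G => δ ↑g := (bbuniq c hcK _ hδ').symm
    funext i
    rw [hlam'val c hcK i, hbval]
    simp only [hπa i, QuotientGroup.mk_one, sub_self, Pi.zero_apply]
  -- assemble the injective map
  have hkerΘ : LinearMap.ker
      ((twoCoboundaries (Rep.trivial ℝ G ℝ)).mkQ ∘ₗ inflZ N) = K := by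
    rw [LinearMap.ker_comp, Submodule.ker_mkQ]
  have hkerΞ : LinearMap.ker
      (((twoCoboundaries (Rep.trivial ℝ G ℝ)).mkQ ∘ₗ inflZ N).prod lam')
      = twoCoboundaries (Rep.trivial ℝ (G ⧸ N) ℝ) := by
    rw [LinearMap.ker_prod, hkerΘ]
    ext c
    rw [Submodule.mem_inf, LinearMap.mem_ker]
    constructor
    · rintro ⟨h1, h2⟩
      exact main1 c h1 h2
    · intro hc
      exact main2 c hc
  refine ⟨(twoCoboundaries (Rep.trivial ℝ (G ⧸ N) ℝ)).liftQ _ (le_of_eq hkerΞ.symm), ?_⟩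
  rw [← LinearMap.ker_eq_bot]
  exact Submodule.ker_liftQ_eq_bot _ _ _ (le_of_eq hkerΞ)

end Aux

set_option maxHeartbeats 2000000 in
set_option synthInstance.maxHeartbeats 200000 in
/-- If every homomorphism `G → (ℝ, +)` is trivial and `H²(G; ℝ)` (trivial coefficients) has
dimension `d`, then for the normal closure `N` of `k` elements of `G`, `H²(G/N; ℝ)` is
finite-dimensional of dimension at most `d + k`. -/
theorem finrank_H2_quotient_le
    {G : Type} [Group G] {k : ℕ} (a : Fin k → G)
    (hH1 : ∀ f : G → ℝ, (∀ x y : G, f (x * y) = f x + f y) → ∀ x, f x = 0)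
    (d : ℕ)
    [FiniteDimensional ℝ (groupCohomology (Rep.trivial ℝ G ℝ) 2)]
    (hd : Module.finrank ℝ (groupCohomology (Rep.trivial ℝ G ℝ) 2) = d) :
    FiniteDimensional ℝ
      (groupCohomology (Rep.trivial ℝ (G ⧸ Subgroup.normalClosure (Set.range a)) ℝ) 2) ∧
    Module.finrank ℝ
      (groupCohomology (Rep.trivial ℝ (G ⧸ Subgroup.normalClosure (Set.range a)) ℝ) 2)
      ≤ d + k := by
  have haN : ∀ i, a i ∈ Subgroup.normalClosure (Set.range a) :=
    fun i => Subgroup.subset_normalClosure (Set.mem_range_self i)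
  have hmin : ∀ H : Subgroup G, H.Normal → (∀ i, a i ∈ H) →
      Subgroup.normalClosure (Set.range a) ≤ H := by
    intro H hnorm hmem
    exact Subgroup.normalClosure_le_normal (by rintro x ⟨i, rfl⟩; exact hmem i)
  obtain ⟨f, hf⟩ := exists_injective_map a (Subgroup.normalClosure (Set.range a)) haN hmin hH1
  have eA : groupCohomology (Rep.trivial ℝ G ℝ) 2 ≃ₗ[ℝ] H2q (Rep.trivial ℝ G ℝ) :=
    (isoH2q (Rep.trivial ℝ G ℝ))
  have eB : groupCohomology (Rep.trivial ℝ (G ⧸ Subgroup.normalClosure (Set.range a)) ℝ) 2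
      ≃ₗ[ℝ] H2q (Rep.trivial ℝ (G ⧸ Subgroup.normalClosure (Set.range a)) ℝ) :=
    (isoH2q (Rep.trivial ℝ (G ⧸ Subgroup.normalClosure (Set.range a)) ℝ))
  haveI : FiniteDimensional ℝ (H2q (Rep.trivial ℝ G ℝ)) := eA.finiteDimensional
  have hinj : Function.Injective (f.comp
      (eB : groupCohomology (Rep.trivial ℝ (G ⧸ Subgroup.normalClosure (Set.range a)) ℝ) 2 →ₗ[ℝ]
        H2q (Rep.trivial ℝ (G ⧸ Subgroup.normalClosure (Set.range a)) ℝ))) :=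
    hf.comp eB.injective
  haveI : Module.Finite ℝ
      (H2q (Rep.trivial ℝ G ℝ) × (Fin k → ℝ)) := Module.Finite.prod
  haveI : FiniteDimensional ℝ
      (groupCohomology (Rep.trivial ℝ (G ⧸ Subgroup.normalClosure (Set.range a)) ℝ) 2) :=
    FiniteDimensional.of_injective _ hinj
  refine ⟨inferInstance, ?_⟩
  have h1 : Module.finrank ℝ
      (groupCohomology (Rep.trivial ℝ (G ⧸ Subgroup.normalClosure (Set.range a)) ℝ) 2)
      ≤ Module.finrank ℝ (H2q (Rep.trivial ℝ G ℝ) × (Fin k → ℝ)) :=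
    LinearMap.finrank_le_finrank_of_injective hinj
  have h2 : Module.finrank ℝ (H2q (Rep.trivial ℝ G ℝ) × (Fin k → ℝ))
      = Module.finrank ℝ (H2q (Rep.trivial ℝ G ℝ)) + Module.finrank ℝ (Fin k → ℝ) :=
    Module.finrank_prod
  have h3 : Module.finrank ℝ (H2q (Rep.trivial ℝ G ℝ)) = d := by
    rw [← eA.finrank_eq, hd]
  have h4 : Module.finrank ℝ (Fin k → ℝ) = k := by
    rw [Module.finrank_pi]
    simp
  omega
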